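/- Let n ≥ 2 be an integer, N = 4n, and let a = (a₁,…,a_{2n}) be a tuple of integers with a₁ ≥ ⋯ ≥ a_{2n−1} ≥ |a_{2n}| and a₁+⋯+a_{2n} even (these are the dominant weights of SO(4n)/ℤ₂). Then: (i) C_N(a) < 16(n−1) if and only if a is the zero tuple, or a = ε₁+ε₂, or (n ≥ 3 and a = 2ε₁); (ii) C_N(a) = 16(n−1) if and only if a = ε₁+ε₂+ε₃+ε₄, or n = 2 and a ∈ {2ε₁, ε₁+ε₂+ε₃−ε₄}. (Here 16(n−1) = C_N(ε₁+ε₂+ε₃+ε₄).) -/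

import Mathlib

open Finset

/-- The Casimir number `C_N(a) = Σ_{i=1}^{m} aᵢ(aᵢ + N − 2i)` (integer entries). -/
def casimirSOZ (N : ℕ) {m : ℕ} (a : Fin m → ℤ) : ℤ :=
  ∑ i : Fin m, a i * (a i + (N : ℤ) - 2 * ((i.1 : ℤ) + 1))

/-- The tuple `ε₁ + ⋯ + ε_k` (integer entries). -/
def epsSumZ (m k : ℕ) : Fin m → ℤ := fun j => if (j.1 : ℕ) < k then 1 else 0

/-- The tuple `2ε₁`. -/
def twoEps1Z (m : ℕ) : Fin m → ℤ := fun j => if j.1 = 0 then 2 else 0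

/-- The tuple `ε₁ + ε₂ + ε₃ − ε₄`. -/
def eps123Minus4Z (m : ℕ) : Fin m → ℤ :=
  fun j => if j.1 < 3 then 1 else if j.1 = 3 then -1 else 0

/-- ℕ-indexed extension of `a`. -/
def Afun (n : ℕ) (a : Fin (2*n) → ℤ) : ℕ → ℤ :=
  fun i => if h : i < 2*n then a ⟨i, h⟩ else 0

/-- ℕ-indexed Casimir summand. -/
def Tfun (n : ℕ) (a : Fin (2*n) → ℤ) : ℕ → ℤ :=
  fun i => Afun n a i * (Afun n a i + 4*(n:ℤ) - 2*((i:ℤ)+1))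

lemma A_eq (n : ℕ) (a : Fin (2*n) → ℤ) (i : Fin (2*n)) : Afun n a i.1 = a i := by
  simp [Afun, i.2]

lemma casimir_eq (n : ℕ) (a : Fin (2*n) → ℤ) :
    casimirSOZ (4*n) a = ∑ i ∈ Finset.range (2*n), Tfun n a i := by
  rw [← Fin.sum_univ_eq_sum_range (Tfun n a) (2*n)]
  refine Finset.sum_congr rfl fun i _ => ?_
  rw [Tfun, A_eq]
  push_cast
  ring

lemma sum_a_eq (n : ℕ) (a : Fin (2*n) → ℤ) :
    (∑ i, a i) = ∑ i ∈ Finset.range (2*n), Afun n a i := by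
  rw [← Fin.sum_univ_eq_sum_range (Afun n a) (2*n)]
  exact Finset.sum_congr rfl fun i _ => (A_eq n a i).symm

section
variable {n : ℕ} {a : Fin (2*n) → ℤ}

lemma A_mono (hmono : ∀ i j : Fin (2 * n), i ≤ j → (j.1 : ℕ) + 1 < 2 * n → a j ≤ a i)
    (i j : ℕ) (hij : i ≤ j) (hj : j + 1 < 2*n) : Afun n a j ≤ Afun n a i := by
  have hj' : j < 2*n := by omega
  have hi' : i < 2*n := by omega
  rw [Afun, Afun, dif_pos hj', dif_pos hi']
  exact hmono ⟨i, hi'⟩ ⟨j, hj'⟩ (by exact hij) hj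

lemma A_nonneg (hn : 2 ≤ n)
    (hmono : ∀ i j : Fin (2 * n), i ≤ j → (j.1 : ℕ) + 1 < 2 * n → a j ≤ a i)
    (hlast : |a ⟨2 * n - 1, Nat.sub_lt (by omega) Nat.one_pos⟩| ≤ a ⟨2 * n - 2, Nat.sub_lt (by omega) Nat.zero_lt_two⟩)
    (i : ℕ) (hi : i < 2*n - 1) : 0 ≤ Afun n a i := by
  have h1 : 0 ≤ Afun n a (2*n-2) := by
    rw [Afun, dif_pos (by omega : 2*n-2 < 2*n)]
    exact le_trans (abs_nonneg _) hlast
  have h2 := A_mono hmono i (2*n-2) (by omega) (by omega)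
  linarith

lemma A_last (hn : 2 ≤ n)
    (hlast : |a ⟨2 * n - 1, Nat.sub_lt (by omega) Nat.one_pos⟩| ≤ a ⟨2 * n - 2, Nat.sub_lt (by omega) Nat.zero_lt_two⟩) :
    |Afun n a (2*n-1)| ≤ Afun n a (2*n-2) := by
  rw [Afun, Afun, dif_pos (by omega : 2*n-1 < 2*n), dif_pos (by omega : 2*n-2 < 2*n)]
  exact hlast

lemma T_nonneg (hn : 2 ≤ n)
    (hmono : ∀ i j : Fin (2 * n), i ≤ j → (j.1 : ℕ) + 1 < 2 * n → a j ≤ a i)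
    (hlast : |a ⟨2 * n - 1, Nat.sub_lt (by omega) Nat.one_pos⟩| ≤ a ⟨2 * n - 2, Nat.sub_lt (by omega) Nat.zero_lt_two⟩)
    (i : ℕ) : 0 ≤ Tfun n a i := by
  rw [Tfun]
  by_cases h : i < 2*n
  · by_cases h2 : i = 2*n-1
    · subst h2
      have h' : Afun n a (2*n-1) + 4*(n:ℤ) - 2*(((2*n-1 : ℕ):ℤ)+1) = Afun n a (2*n-1) := by
        omega
      rw [h']
      exact mul_self_nonneg _
    · have hA := A_nonneg hn hmono hlast i (by omega)
      have hc : 0 ≤ 4*(n:ℤ) - 2*((i:ℤ)+1) := by omega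
      have : 0 ≤ Afun n a i + 4*(n:ℤ) - 2*((i:ℤ)+1) := by linarith
      nlinarith
  · simp [Afun, h]

lemma prefix_le (hn : 2 ≤ n)
    (hmono : ∀ i j : Fin (2 * n), i ≤ j → (j.1 : ℕ) + 1 < 2 * n → a j ≤ a i)
    (hlast : |a ⟨2 * n - 1, Nat.sub_lt (by omega) Nat.one_pos⟩| ≤ a ⟨2 * n - 2, Nat.sub_lt (by omega) Nat.zero_lt_two⟩)
    (j : ℕ) (hj : j ≤ 2*n) :
    ∑ i ∈ Finset.range j, Tfun n a i ≤ casimirSOZ (4*n) a := by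
  rw [casimir_eq]
  exact Finset.sum_le_sum_of_subset_of_nonneg (Finset.range_subset_range.2 hj)
    (fun i _ _ => T_nonneg hn hmono hlast i)

lemma tail_zero (hn : 2 ≤ n)
    (hmono : ∀ i j : Fin (2 * n), i ≤ j → (j.1 : ℕ) + 1 < 2 * n → a j ≤ a i)
    (hlast : |a ⟨2 * n - 1, Nat.sub_lt (by omega) Nat.one_pos⟩| ≤ a ⟨2 * n - 2, Nat.sub_lt (by omega) Nat.zero_lt_two⟩)
    (j : ℕ) (h1 : 1 ≤ j) (hj : j ≤ 2*n-1) (h0 : Afun n a j = 0)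
    (i : ℕ) (hij : j ≤ i) : Afun n a i = 0 := by
  by_cases hi : i < 2*n
  · have mid : ∀ k, j ≤ k → k < 2*n-1 → Afun n a k = 0 := by
      intro k hk1 hk2
      have := A_mono hmono j k hk1 (by omega)
      have := A_nonneg hn hmono hlast k hk2
      omega
    by_cases h2 : i = 2*n-1
    · subst h2
      rcases eq_or_lt_of_le hj with h | h
      · rw [← h]; exact h0
      · have hm : Afun n a (2*n-2) = 0 := mid _ (by omega) (by omega)
        have h3 := A_last hn hlast
        rw [hm] at h3
        exact abs_nonpos_iff.mp h3
    · exact mid i hij (by omega)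
  · simp [Afun, hi]

lemma casimir_prefix {j : ℕ} (hj : j ≤ 2*n)
    (htail : ∀ i, j ≤ i → Afun n a i = 0) :
    casimirSOZ (4*n) a = ∑ i ∈ Finset.range j, Tfun n a i := by
  rw [casimir_eq]
  symm
  refine Finset.sum_subset (Finset.range_subset_range.2 hj) (fun x hx hnx => ?_)
  rw [Tfun, htail x (by simp at hnx; omega)]
  ring

lemma sum_prefix {j : ℕ} (hj : j ≤ 2*n)
    (htail : ∀ i, j ≤ i → Afun n a i = 0) :
    (∑ i, a i) = ∑ i ∈ Finset.range j, Afun n a i := by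
  rw [sum_a_eq]
  symm
  exact Finset.sum_subset (Finset.range_subset_range.2 hj)
    (fun x hx hnx => htail x (by simp at hnx; omega))

lemma eq_of_A (b : Fin (2*n) → ℤ) (h : ∀ i : ℕ, i < 2*n → Afun n a i = Afun n b i) :
    a = b :=
  funext fun i => by rw [← A_eq n a i, ← A_eq n b i]; exact h i.1 i.2

end

section
variable {n : ℕ}

lemma A_epsSum (k : ℕ) (hk : k ≤ 2*n) (i : ℕ) :
    Afun n (epsSumZ (2*n) k) i = if i < k then 1 else 0 := by
  by_cases h : i < 2*n
  · simp [Afun, h, epsSumZ]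
  · rw [Afun, dif_neg h, if_neg (by omega)]

lemma A_twoEps1 (hn : 2 ≤ n) (i : ℕ) :
    Afun n (twoEps1Z (2*n)) i = if i = 0 then 2 else 0 := by
  by_cases h : i < 2*n
  · simp [Afun, h, twoEps1Z]
  · rw [Afun, dif_neg h, if_neg (by omega)]

lemma A_eps123m4 (hn : 2 ≤ n) (i : ℕ) :
    Afun n (eps123Minus4Z (2*n)) i =
      if i < 3 then 1 else if i = 3 then -1 else 0 := by
  by_cases h : i < 2*n
  · simp [Afun, h, eps123Minus4Z]
  · rw [Afun, dif_neg h, if_neg (by omega), if_neg (by omega)]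

lemma casimir_zero' : casimirSOZ (4*n) (0 : Fin (2*n) → ℤ) = 0 := by
  simp [casimirSOZ]

lemma casimir_eps2 (hn : 2 ≤ n) :
    casimirSOZ (4*n) (epsSumZ (2*n) 2) = 8*(n:ℤ) - 4 := by
  rw [casimir_prefix (j := 2) (by omega)
    (fun i hi => by rw [A_epsSum 2 (by omega), if_neg (by omega)])]
  simp [Finset.sum_range_succ, Tfun, A_epsSum 2 (by omega : 2 ≤ 2*n)]
  ring

lemma casimir_eps4 (hn : 2 ≤ n) :
    casimirSOZ (4*n) (epsSumZ (2*n) 4) = 16*(n:ℤ) - 16 := by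
  rw [casimir_prefix (j := 4) (by omega)
    (fun i hi => by rw [A_epsSum 4 (by omega), if_neg (by omega)])]
  simp [Finset.sum_range_succ, Tfun, A_epsSum 4 (by omega : 4 ≤ 2*n)]
  push_cast
  ring

lemma casimir_twoEps1 (hn : 2 ≤ n) :
    casimirSOZ (4*n) (twoEps1Z (2*n)) = 8*(n:ℤ) := by
  rw [casimir_prefix (j := 1) (by omega)
    (fun i hi => by rw [A_twoEps1 hn, if_neg (by omega)])]
  simp [Finset.sum_range_succ, Tfun, A_twoEps1 hn]
  ring

lemma casimir_eps123m4 (hn : 2 ≤ n) :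
    casimirSOZ (4*n) (eps123Minus4Z (2*n)) = 8*(n:ℤ) := by
  rw [casimir_prefix (j := 4) (by omega)
    (fun i hi => by rw [A_eps123m4 hn, if_neg (by omega), if_neg (by omega)])]
  simp [Finset.sum_range_succ, Tfun, A_eps123m4 hn]
  push_cast
  ring

end

section
variable {n : ℕ} {a : Fin (2*n) → ℤ}

lemma forward (hn : 2 ≤ n)
    (hmono : ∀ i j : Fin (2 * n), i ≤ j → (j.1 : ℕ) + 1 < 2 * n → a j ≤ a i)
    (hlast : |a ⟨2 * n - 1, Nat.sub_lt (by omega) Nat.one_pos⟩| ≤ a ⟨2 * n - 2, Nat.sub_lt (by omega) Nat.zero_lt_two⟩)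
    (heven : Even (∑ i, a i))
    (H : casimirSOZ (4*n) a ≤ 16*(n:ℤ) - 16) :
    a = 0 ∨ a = epsSumZ (2*n) 2 ∨ a = twoEps1Z (2*n) ∨ a = epsSumZ (2*n) 4 ∨
      (n = 2 ∧ a = eps123Minus4Z (2*n)) := by
  have hnz : (2:ℤ) ≤ (n:ℤ) := by exact_mod_cast hn
  have nn : ∀ i, i < 2*n-1 → 0 ≤ Afun n a i := A_nonneg hn hmono hlast
  have mono : ∀ i j : ℕ, i ≤ j → j + 1 < 2*n → Afun n a j ≤ Afun n a i := A_mono hmono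
  have P : ∀ j, j ≤ 2*n → ∑ i ∈ Finset.range j, Tfun n a i ≤ casimirSOZ (4*n) a :=
    prefix_le hn hmono hlast
  have e0 : Tfun n a 0 = Afun n a 0 * (Afun n a 0 + 4*(n:ℤ) - 2) := by rw [Tfun]; norm_num
  have e1 : Tfun n a 1 = Afun n a 1 * (Afun n a 1 + 4*(n:ℤ) - 4) := by rw [Tfun]; norm_num
  have e2 : Tfun n a 2 = Afun n a 2 * (Afun n a 2 + 4*(n:ℤ) - 6) := by rw [Tfun]; norm_num
  have e3 : Tfun n a 3 = Afun n a 3 * (Afun n a 3 + 4*(n:ℤ) - 8) := by rw [Tfun]; norm_num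
  have e4 : Tfun n a 4 = Afun n a 4 * (Afun n a 4 + 4*(n:ℤ) - 10) := by rw [Tfun]; norm_num
  have S1 : Afun n a 0 * (Afun n a 0 + 4*(n:ℤ) - 2) ≤ casimirSOZ (4*n) a := by
    have := P 1 (by omega); rwa [Finset.sum_range_one, e0] at this
  have S2 : Afun n a 0 * (Afun n a 0 + 4*(n:ℤ) - 2)
      + Afun n a 1 * (Afun n a 1 + 4*(n:ℤ) - 4) ≤ casimirSOZ (4*n) a := by
    have := P 2 (by omega)
    rwa [Finset.sum_range_succ, Finset.sum_range_one, e0, e1] at this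
  have S3 : Afun n a 0 * (Afun n a 0 + 4*(n:ℤ) - 2)
      + Afun n a 1 * (Afun n a 1 + 4*(n:ℤ) - 4)
      + Afun n a 2 * (Afun n a 2 + 4*(n:ℤ) - 6) ≤ casimirSOZ (4*n) a := by
    have := P 3 (by omega)
    rwa [Finset.sum_range_succ, Finset.sum_range_succ, Finset.sum_range_one, e0, e1, e2] at this
  have parity : ∀ c : ℤ, (∑ i, a i) = c → ¬ Odd c := by
    intro c hc hodd
    obtain ⟨k, hk⟩ := heven
    obtain ⟨m, hm⟩ := hodd
    omega
  have hb0nn : 0 ≤ Afun n a 0 := nn 0 (by omega)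
  have hb0le : Afun n a 0 ≤ 3 := by nlinarith
  have hb1le : Afun n a 1 ≤ Afun n a 0 := mono 0 1 (by omega) (by omega)
  have hb1nn : 0 ≤ Afun n a 1 := nn 1 (by omega)
  have hb2le : Afun n a 2 ≤ Afun n a 1 := mono 1 2 (by omega) (by omega)
  have hb2nn : 0 ≤ Afun n a 2 := nn 2 (by omega)
  have hb0cases : Afun n a 0 = 0 ∨ Afun n a 0 = 1 ∨ Afun n a 0 = 2 ∨ Afun n a 0 = 3 := by omega
  rcases hb0cases with h0 | h0 | h0 | h0
  · -- b0 = 0 : a = 0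
    have htail := tail_zero hn hmono hlast 1 (by omega) (by omega) (by omega)
    left
    refine eq_of_A _ fun i hi => ?_
    have hz : Afun n (0 : Fin (2*n) → ℤ) i = 0 := by simp [Afun]
    rw [hz]
    rcases Nat.eq_zero_or_pos i with h | h
    · rw [h]; omega
    · exact htail i (by omega)
  · -- b0 = 1
    have hb1cases : Afun n a 1 = 0 ∨ Afun n a 1 = 1 := by omega
    rcases hb1cases with h1 | h1
    · have htail := tail_zero hn hmono hlast 1 (by omega) (by omega) (by omega)
      have hs := sum_prefix (n := n) (j := 1) (by omega) htail
      rw [Finset.sum_range_one] at hs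
      have hsum : (∑ i, a i) = 1 := by rw [hs]; omega
      exact ((parity 1 hsum) ⟨0, by norm_num⟩).elim
    · have hb2cases : Afun n a 2 = 0 ∨ Afun n a 2 = 1 := by omega
      rcases hb2cases with h2 | h2
      · have htail := tail_zero hn hmono hlast 2 (by omega) (by omega) (by omega)
        right; left
        refine eq_of_A _ fun i hi => ?_
        rw [A_epsSum 2 (by omega)]
        match i, hi with
        | 0, _ => rw [if_pos (by omega)]; omega
        | 1, _ => rw [if_pos (by omega)]; omega
        | (m+2), _ => rw [if_neg (by omega)]; exact htail _ (by omega)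
      · rcases eq_or_lt_of_le hn with hn2 | hn3
        · -- n = 2
          have hn2' : n = 2 := hn2.symm
          subst hn2'
          have hl := A_last hn hlast
          norm_num at hl
          obtain ⟨hlo, hhi⟩ := abs_le.mp hl
          have hb3cases : Afun 2 a 3 = -1 ∨ Afun 2 a 3 = 0 ∨ Afun 2 a 3 = 1 := by omega
          rcases hb3cases with h3 | h3 | h3
          · right; right; right; right
            refine ⟨rfl, eq_of_A _ fun i hi => ?_⟩
            rw [A_eps123m4 hn]
            match i, hi with
            | 0, _ => rw [if_pos (by omega)]; omega
            | 1, _ => rw [if_pos (by omega)]; omega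
            | 2, _ => rw [if_pos (by omega)]; omega
            | 3, _ => rw [if_neg (by omega), if_pos rfl]; omega
            | (m+4), hi => exact absurd hi (by omega)
          · have htail := tail_zero hn hmono hlast 3 (by omega) (by omega) (by omega)
            have hs := sum_prefix (n := 2) (j := 3) (by omega) htail
            simp [Finset.sum_range_succ] at hs
            have hsum : (∑ i, a i) = 3 := by rw [hs]; omega
            exact ((parity 3 hsum) ⟨1, by norm_num⟩).elim
          · right; right; right; left
            refine eq_of_A _ fun i hi => ?_
            rw [A_epsSum 4 (by omega)]
            match i, hi with
            | 0, _ => rw [if_pos (by omega)]; omega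
            | 1, _ => rw [if_pos (by omega)]; omega
            | 2, _ => rw [if_pos (by omega)]; omega
            | 3, _ => rw [if_pos (by omega)]; omega
            | (m+4), hi => exact absurd hi (by omega)
        · -- n ≥ 3
          have hn3' : 3 ≤ n := hn3
          have hn3z : (3:ℤ) ≤ (n:ℤ) := by exact_mod_cast hn3'
          have hb3le : Afun n a 3 ≤ Afun n a 2 := mono 2 3 (by omega) (by omega)
          have hb3nn : 0 ≤ Afun n a 3 := nn 3 (by omega)
          have hb3cases : Afun n a 3 = 0 ∨ Afun n a 3 = 1 := by omega
          rcases hb3cases with h3 | h3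
          · have htail := tail_zero hn hmono hlast 3 (by omega) (by omega) (by omega)
            have hs := sum_prefix (n := n) (j := 3) (by omega) htail
            simp [Finset.sum_range_succ] at hs
            have hsum : (∑ i, a i) = 3 := by rw [hs]; omega
            exact ((parity 3 hsum) ⟨1, by norm_num⟩).elim
          · have hb4le : Afun n a 4 ≤ Afun n a 3 := mono 3 4 (by omega) (by omega)
            have hb4nn : 0 ≤ Afun n a 4 := nn 4 (by omega)
            have hb4cases : Afun n a 4 = 0 ∨ Afun n a 4 = 1 := by omega
            rcases hb4cases with h4 | h4
            · have htail := tail_zero hn hmono hlast 4 (by omega) (by omega) (by omega)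
              right; right; right; left
              refine eq_of_A _ fun i hi => ?_
              rw [A_epsSum 4 (by omega)]
              match i, hi with
              | 0, _ => rw [if_pos (by omega)]; omega
              | 1, _ => rw [if_pos (by omega)]; omega
              | 2, _ => rw [if_pos (by omega)]; omega
              | 3, _ => rw [if_pos (by omega)]; omega
              | (m+4), _ => rw [if_neg (by omega)]; exact htail _ (by omega)
            · -- b4 = 1 : contradiction
              by_cases h5 : Afun n a 5 = 0
              · have htail := tail_zero hn hmono hlast 5 (by omega) (by omega) h5
                have hs := sum_prefix (n := n) (j := 5) (by omega) htail
                simp [Finset.sum_range_succ] at hs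
                have hsum : (∑ i, a i) = 5 := by rw [hs]; omega
                exact ((parity 5 hsum) ⟨2, by norm_num⟩).elim
              · have hT5 : 1 ≤ Tfun n a 5 := by
                  rw [Tfun]
                  push_cast
                  rcases eq_or_lt_of_le hn3' with hn4 | hn4
                  · have hn4' : n = 3 := hn4.symm
                    subst hn4'
                    have habs : 1 ≤ |Afun 3 a 5| := Int.one_le_abs h5
                    have hms := abs_mul_abs_self (Afun 3 a 5)
                    have hz : Afun 3 a 5 + 4*((3:ℕ):ℤ) - 12 = Afun 3 a 5 := by
                      norm_num
                    rw [hz]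
                    nlinarith [abs_nonneg (Afun 3 a 5)]
                  · have hb5nn : 0 ≤ Afun n a 5 := nn 5 (by omega)
                    have hb51 : 1 ≤ Afun n a 5 := by omega
                    have hn4z : (4:ℤ) ≤ (n:ℤ) := by exact_mod_cast hn4
                    nlinarith [mul_nonneg (by linarith : (0:ℤ) ≤ Afun n a 5 - 1)
                      (by linarith : (0:ℤ) ≤ Afun n a 5 + 4*(n:ℤ) - 12)]
                have S6 := P 6 (by omega)
                rw [Finset.sum_range_succ, Finset.sum_range_succ, Finset.sum_range_succ,
                  Finset.sum_range_succ, Finset.sum_range_succ, Finset.sum_range_one,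
                  e0, e1, e2, e3, e4, h0, h1, h2, h3, h4] at S6
                have : Tfun n a 5 ≤ casimirSOZ (4*n) a - (20*(n:ℤ) - 25) := by linarith
                linarith
  · -- b0 = 2
    have hb1cases : Afun n a 1 = 0 ∨ Afun n a 1 = 1 ∨ Afun n a 1 = 2 := by omega
    rcases hb1cases with h1 | h1 | h1
    · have htail := tail_zero hn hmono hlast 1 (by omega) (by omega) (by omega)
      right; right; left
      refine eq_of_A _ fun i hi => ?_
      rw [A_twoEps1 hn]
      match i, hi with
      | 0, _ => rw [if_pos rfl]; omega
      | (m+1), _ => rw [if_neg (by omega)]; exact htail _ (by omega)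
    · have hb2cases : Afun n a 2 = 0 ∨ Afun n a 2 = 1 := by omega
      rcases hb2cases with h2 | h2
      · have htail := tail_zero hn hmono hlast 2 (by omega) (by omega) (by omega)
        have hs := sum_prefix (n := n) (j := 2) (by omega) htail
        simp [Finset.sum_range_succ] at hs
        have hsum : (∑ i, a i) = 3 := by rw [hs]; omega
        exact ((parity 3 hsum) ⟨1, by norm_num⟩).elim
      · rw [h0, h1, h2] at S3
        linarith
    · rw [h0, h1] at S2
      linarith
  · -- b0 = 3
    have hb1cases : Afun n a 1 = 0 ∨ 1 ≤ Afun n a 1 := by omega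
    rcases hb1cases with h1 | h1
    · have htail := tail_zero hn hmono hlast 1 (by omega) (by omega) (by omega)
      have hs := sum_prefix (n := n) (j := 1) (by omega) htail
      rw [Finset.sum_range_one] at hs
      have hsum : (∑ i, a i) = 3 := by rw [hs]; omega
      exact ((parity 3 hsum) ⟨1, by norm_num⟩).elim
    · rw [h0] at S2
      have hx : 0 ≤ (Afun n a 1 - 1) * (Afun n a 1 + 4*(n:ℤ) - 3) :=
        mul_nonneg (by omega) (by linarith)
      have hexp : Afun n a 1 * (Afun n a 1 + 4*(n:ℤ) - 4)
          = (Afun n a 1 - 1) * (Afun n a 1 + 4*(n:ℤ) - 3) + (4*(n:ℤ) - 3) := by ring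
      rw [hexp] at S2
      linarith

end

/-- let `n ≥ 2`, `N = 4n`, and let `a = (a₁,…,a_{2n})` be integers
with `a₁ ≥ ⋯ ≥ a_{2n−1} ≥ |a_{2n}|` and `a₁+⋯+a_{2n}` even. Then
(i) `C_N(a) < 16(n−1)` iff `a = 0`, `a = ε₁+ε₂`, or (`n ≥ 3` and `a = 2ε₁`);
(ii) `C_N(a) = 16(n−1)` iff `a = ε₁+ε₂+ε₃+ε₄`, or `n = 2` and
`a ∈ {2ε₁, ε₁+ε₂+ε₃−ε₄}`. -/
theorem stmt6 (n : ℕ) (hn : 2 ≤ n) (a : Fin (2 * n) → ℤ)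
    (hmono : ∀ i j : Fin (2 * n), i ≤ j → (j.1 : ℕ) + 1 < 2 * n → a j ≤ a i)
    (hlast : |a ⟨2 * n - 1, by omega⟩| ≤ a ⟨2 * n - 2, by omega⟩)
    (heven : Even (∑ i, a i)) :
    (casimirSOZ (4 * n) a < 16 * ((n : ℤ) - 1) ↔
      a = 0 ∨ a = epsSumZ (2 * n) 2 ∨ (3 ≤ n ∧ a = twoEps1Z (2 * n))) ∧
    (casimirSOZ (4 * n) a = 16 * ((n : ℤ) - 1) ↔
      a = epsSumZ (2 * n) 4 ∨
      (n = 2 ∧ (a = twoEps1Z (2 * n) ∨ a = eps123Minus4Z (2 * n)))) := by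
  have hnz : (2:ℤ) ≤ (n:ℤ) := by exact_mod_cast hn
  constructor
  · constructor
    · intro h
      have hfw := forward hn hmono hlast heven (by linarith)
      rcases hfw with h1 | h1 | h1 | h1 | ⟨hn2, h1⟩
      · exact Or.inl h1
      · exact Or.inr (Or.inl h1)
      · refine Or.inr (Or.inr ⟨?_, h1⟩)
        rw [h1, casimir_twoEps1 hn] at h
        by_contra hcon
        have hn2 : n = 2 := by omega
        subst hn2
        norm_num at h
      · exfalso
        rw [h1, casimir_eps4 hn] at h
        linarith
      · exfalso
        subst hn2
        rw [h1, casimir_eps123m4 hn] at h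
        norm_num at h
    · rintro (h1 | h1 | ⟨h3, h1⟩)
      · rw [h1, casimir_zero']; linarith
      · rw [h1, casimir_eps2 hn]; linarith
      · rw [h1, casimir_twoEps1 hn]
        have : (3:ℤ) ≤ (n:ℤ) := by exact_mod_cast h3
        linarith
  · constructor
    · intro h
      have hfw := forward hn hmono hlast heven (by linarith)
      rcases hfw with h1 | h1 | h1 | h1 | ⟨hn2, h1⟩
      · exfalso; rw [h1, casimir_zero'] at h; linarith
      · exfalso; rw [h1, casimir_eps2 hn] at h; omega
      · refine Or.inr ⟨?_, Or.inl h1⟩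
        rw [h1, casimir_twoEps1 hn] at h
        omega
      · exact Or.inl h1
      · exact Or.inr ⟨hn2, Or.inr h1⟩
    · rintro (h1 | ⟨hn2, h1 | h1⟩)
      · rw [h1, casimir_eps4 hn]; ring
      · subst hn2; rw [h1, casimir_twoEps1 hn]; norm_num
      · subst hn2; rw [h1, casimir_eps123m4 hn]; norm_num
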